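/- Let 2d ≤ n and let Φ : U → ℝⁿ (U ⊆ ℝⁿ open) be an extended symplectic map with latent dimension 2d, i.e., Φ(x₁, x₂) = (φ(x₁, x₂), x₂) with x₁ ∈ ℝ^{2d}, x₂ ∈ ℝ^{n−2d}, φ differentiable, and φ(·, x₂) symplectic for each fixed x₂. Let B₀ be the constant n×n block matrix with J⁻¹ in the upper-left 2d×2d block and zeros elsewhere, where J is the canonical 2d×2d symplectic matrix. Then Φ is a Poisson map with respect to B₀: its Jacobian satisfies (∂Φ/∂x)(x) · B₀ · (∂Φ/∂x)(x)ᵀ = B₀ for all x ∈ U. -/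
import Mathlib


open Matrix

/-- Partial derivative of `F` at `y` in the `i`-th coordinate direction. -/
noncomputable def pd {n : ℕ} (F : (Fin n → ℝ) → ℝ) (y : Fin n → ℝ) (i : Fin n) : ℝ :=
  fderiv ℝ F y (Pi.single i 1)

/-- The Jacobian matrix of `f` at `y`. -/
noncomputable def jac {n : ℕ} (f : (Fin n → ℝ) → (Fin n → ℝ)) (y : Fin n → ℝ) :
    Matrix (Fin n) (Fin n) ℝ :=
  fun i j => pd (fun x => f x i) y j

/-- The canonical `2d × 2d` symplectic matrix `J = ((0, I_d), (-I_d, 0))`. -/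
def Jmat (d : ℕ) : Matrix (Fin (2*d)) (Fin (2*d)) ℝ := fun i j =>
  if (i:ℕ) < d ∧ (j:ℕ) = (i:ℕ) + d then 1
  else if (j:ℕ) < d ∧ (i:ℕ) = (j:ℕ) + d then -1
  else 0

/-- The constant structure matrix `B₀ = ((J⁻¹, 0), (0, 0))` on `ℝ^{2d+m}`,
with `J⁻¹ = ((0, -I_d), (I_d, 0))` in the upper-left `2d × 2d` block. -/
def B0mat (d m : ℕ) : Matrix (Fin (2*d+m)) (Fin (2*d+m)) ℝ := fun i j =>
  if (i:ℕ) < d ∧ (j:ℕ) = (i:ℕ) + d then -1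
  else if (j:ℕ) < d ∧ (i:ℕ) = (j:ℕ) + d then 1
  else 0

/-- The upper-left `2d × 2d` block of the Jacobian of `Φ : ℝ^{2d+m} → ℝ^{2d+m}`, i.e. the
Jacobian of `x₁ ↦ φ(x₁, x₂)` for the fixed value `x₂` of the last `m` coordinates. -/
noncomputable def blockJac {d m : ℕ} (Φ : (Fin (2*d+m) → ℝ) → (Fin (2*d+m) → ℝ))
    (x : Fin (2*d+m) → ℝ) : Matrix (Fin (2*d)) (Fin (2*d)) ℝ :=
  fun i j => pd (fun z => Φ z (Fin.castLE (Nat.le_add_right _ _) i)) x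
    (Fin.castLE (Nat.le_add_right _ _) j)

lemma Jmat_mul_Jmat (d : ℕ) : Jmat d * Jmat d = -1 := by
  ext i j
  rw [Matrix.mul_apply, Matrix.neg_apply, Matrix.one_apply]
  by_cases hi : (i:ℕ) < d
  · have hlt : (i:ℕ) + d < 2*d := by omega
    rw [Finset.sum_eq_single (⟨(i:ℕ)+d, hlt⟩ : Fin (2*d))]
    · have h1 : Jmat d i ⟨(i:ℕ)+d, hlt⟩ = 1 := by
        simp [Jmat, hi]
      rw [h1, one_mul]
      simp only [Jmat, Fin.ext_iff]
      split_ifs <;> (try norm_num) <;> omega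
    · intro k _ hk
      have : Jmat d i k = 0 := by
        simp only [Jmat]
        split_ifs with h1 h2
        · exact absurd (Fin.ext (by omega : (k:ℕ) = (i:ℕ)+d)) hk
        · omega
        · rfl
      rw [this, zero_mul]
    · intro h; exact absurd (Finset.mem_univ _) h
  · have hlt : (i:ℕ) - d < 2*d := by omega
    have hid : d ≤ (i:ℕ) := by omega
    have hi2 : (i:ℕ) < 2*d := i.isLt
    rw [Finset.sum_eq_single (⟨(i:ℕ)-d, hlt⟩ : Fin (2*d))]
    · have h1 : Jmat d i ⟨(i:ℕ)-d, hlt⟩ = -1 := by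
        simp only [Jmat]
        split_ifs <;> (try norm_num) <;> omega
      rw [h1]
      have h2 : Jmat d ⟨(i:ℕ)-d, hlt⟩ j = if (j:ℕ) = (i:ℕ) then 1 else 0 := by
        simp only [Jmat]
        split_ifs <;> (try norm_num) <;> omega
      rw [h2]
      simp only [Fin.ext_iff]
      split_ifs <;> (try norm_num) <;> omega
    · intro k _ hk
      have : Jmat d i k = 0 := by
        simp only [Jmat]
        split_ifs with h1 h2
        · omega
        · exact absurd (Fin.ext (by omega : (k:ℕ) = (i:ℕ)-d)) hk
        · rfl
      rw [this, zero_mul]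
    · intro h; exact absurd (Finset.mem_univ _) h

lemma sympInv {d : ℕ} (M : Matrix (Fin (2*d)) (Fin (2*d)) ℝ)
    (hM : Mᵀ * Jmat d * M = Jmat d) :
    M * (-(Jmat d)) * Mᵀ = -(Jmat d) := by
  have hJ : Jmat d * Jmat d = -1 := Jmat_mul_Jmat d
  have h1 : (-(Jmat d) * Mᵀ * Jmat d) * M = 1 := by
    have e : -(Jmat d) * Mᵀ * Jmat d * M = -(Jmat d) * (Mᵀ * Jmat d * M) := by
      rw [mul_assoc, mul_assoc, mul_assoc]
    rw [e, hM, neg_mul, hJ, neg_neg]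
  have h2 : M * (-(Jmat d) * Mᵀ * Jmat d) = 1 := mul_eq_one_comm.mp h1
  have hJi : Jmat d * -(Jmat d) = 1 := by rw [mul_neg, hJ, neg_neg]
  calc M * -(Jmat d) * Mᵀ = M * -(Jmat d) * Mᵀ * (Jmat d * -(Jmat d)) := by
        rw [hJi, mul_one]
    _ = (M * (-(Jmat d) * Mᵀ * Jmat d)) * -(Jmat d) := by
        noncomm_ring
    _ = -(Jmat d) := by rw [h2, one_mul]

/-- an extended symplectic map `Φ(x₁,x₂) = (φ(x₁,x₂), x₂)` with latent dimension
`2d` (i.e. `Φ` fixes the last `m = n - 2d` coordinates and `φ(·,x₂)` is symplectic for each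
fixed `x₂`) is a Poisson map with respect to `B₀`: `(∂Φ/∂x) B₀ (∂Φ/∂x)ᵀ = B₀` on `U`. -/
theorem statement_8 {d m : ℕ} (U : Set (Fin (2*d+m) → ℝ)) (hU : IsOpen U)
    (Φ : (Fin (2*d+m) → ℝ) → (Fin (2*d+m) → ℝ))
    (hdiff : ∀ x ∈ U, DifferentiableAt ℝ Φ x)
    (hform : ∀ x ∈ U, ∀ i : Fin (2*d+m), 2*d ≤ (i:ℕ) → Φ x i = x i)
    (hsymp : ∀ x ∈ U, (blockJac Φ x)ᵀ * Jmat d * blockJac Φ x = Jmat d) :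
    ∀ x ∈ U, jac Φ x * B0mat d m * (jac Φ x)ᵀ = B0mat d m := by
  intro x hx
  set A := jac Φ x with hA
  set M := blockJac Φ x with hM
  -- rows with index ≥ 2d are standard basis rows
  have hrow : ∀ i : Fin (2*d+m), 2*d ≤ (i:ℕ) → ∀ k, A i k = if k = i then 1 else 0 := by
    intro i hi k
    have heq : (fun z : Fin (2*d+m) → ℝ => Φ z i) =ᶠ[nhds x] (fun z => z i) := by
      filter_upwards [hU.mem_nhds hx] with z hz using hform z hz i hi
    have hf : fderiv ℝ (fun z : Fin (2*d+m) → ℝ => Φ z i) x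
        = ContinuousLinearMap.proj (R := ℝ) (φ := fun _ : Fin (2*d+m) => ℝ) i := by
      rw [heq.fderiv_eq]
      exact (ContinuousLinearMap.proj (R := ℝ) (φ := fun _ : Fin (2*d+m) => ℝ) i).hasFDerivAt.fderiv
    show fderiv ℝ (fun z => Φ z i) x (Pi.single k 1) = _
    rw [hf]
    simp [Pi.single_apply, eq_comm]
  have hB0l : ∀ k l : Fin (2*d+m), 2*d ≤ (k:ℕ) → B0mat d m k l = 0 := by
    intro k l hk
    simp only [B0mat]
    split_ifs <;> first | rfl | omega
  have hB0r : ∀ k l : Fin (2*d+m), 2*d ≤ (l:ℕ) → B0mat d m k l = 0 := by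
    intro k l hl
    have := k.isLt
    simp only [B0mat]
    split_ifs <;> first | rfl | omega
  have hB0block : ∀ k l : Fin (2*d),
      B0mat d m (Fin.castAdd m k) (Fin.castAdd m l) = (-(Jmat d)) k l := by
    intro k l
    simp only [B0mat, Jmat, Matrix.neg_apply, Fin.coe_castAdd]
    split_ifs <;> norm_num
  have hMk : ∀ (a b : Fin (2*d)), A (Fin.castAdd m a) (Fin.castAdd m b) = M a b :=
    fun a b => rfl
  ext i j
  by_cases hi : (i:ℕ) < 2*d
  · by_cases hj : (j:ℕ) < 2*d
    · -- both indices in the symplectic block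
      set i' : Fin (2*d) := ⟨(i:ℕ), hi⟩ with hi'
      set j' : Fin (2*d) := ⟨(j:ℕ), hj⟩ with hj'
      have hieq : i = Fin.castAdd m i' := Fin.ext rfl
      have hjeq : j = Fin.castAdd m j' := Fin.ext rfl
      have hAB : ∀ l : Fin (2*d),
          (A * B0mat d m) (Fin.castAdd m i') (Fin.castAdd m l) = (M * (-(Jmat d))) i' l := by
        intro l
        rw [Matrix.mul_apply, Matrix.mul_apply, Fin.sum_univ_add]
        have h2 : ∑ k : Fin m, A (Fin.castAdd m i') (Fin.natAdd (2*d) k)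
            * B0mat d m (Fin.natAdd (2*d) k) (Fin.castAdd m l) = 0 :=
          Finset.sum_eq_zero fun k _ => by
            rw [hB0l _ _ (by simp [Fin.natAdd]), mul_zero]
        rw [h2, add_zero]
        exact Finset.sum_congr rfl fun k _ => by rw [hMk i' k, hB0block k l]
      have key : (A * B0mat d m * Aᵀ) (Fin.castAdd m i') (Fin.castAdd m j')
          = (M * (-(Jmat d)) * Mᵀ) i' j' := by
        rw [Matrix.mul_apply, Matrix.mul_apply, Fin.sum_univ_add]
        have h2 : ∑ l : Fin m, (A * B0mat d m) (Fin.castAdd m i') (Fin.natAdd (2*d) l)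
            * Aᵀ (Fin.natAdd (2*d) l) (Fin.castAdd m j') = 0 :=
          Finset.sum_eq_zero fun l _ => by
            have hz : (A * B0mat d m) (Fin.castAdd m i') (Fin.natAdd (2*d) l) = 0 := by
              rw [Matrix.mul_apply]
              exact Finset.sum_eq_zero fun k _ => by
                rw [hB0r _ _ (by simp [Fin.natAdd]), mul_zero]
            rw [hz, zero_mul]
        rw [h2, add_zero]
        refine Finset.sum_congr rfl fun l _ => ?_
        rw [hAB l, Matrix.transpose_apply, Matrix.transpose_apply, hMk j' l]
      rw [hieq, hjeq, key, sympInv M (hsymp x hx), ← hB0block i' j']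
    · -- j outside the block
      rw [Matrix.mul_apply]
      have hz : ∀ l, (A * B0mat d m) i l * Aᵀ l j = 0 := by
        intro l
        rw [Matrix.transpose_apply, hrow j (by omega) l]
        by_cases hl : l = j
        · rw [if_pos hl, mul_one, hl, Matrix.mul_apply]
          exact Finset.sum_eq_zero fun k _ => by rw [hB0r k j (by omega), mul_zero]
        · rw [if_neg hl, mul_zero]
      rw [Finset.sum_eq_zero fun l _ => hz l]
      exact (hB0r i j (by omega)).symm
  · -- i outside the block
    rw [Matrix.mul_apply]
    have hz : ∀ l, (A * B0mat d m) i l * Aᵀ l j = 0 := by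
      intro l
      have h0 : (A * B0mat d m) i l = 0 := by
        rw [Matrix.mul_apply]
        refine Finset.sum_eq_zero fun k _ => ?_
        rw [hrow i (by omega) k]
        by_cases hk : k = i
        · rw [if_pos hk, one_mul, hk, hB0l i l (by omega)]
        · rw [if_neg hk, zero_mul]
      rw [h0, zero_mul]
    rw [Finset.sum_eq_zero fun l _ => hz l]
    exact (hB0l i j (by omega)).symm
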